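/- arXiv:1412.7142 — 2 statements merged into one kernel-verified Lean document; each statement's English description precedes it below -/
import Mathlib

section
/- Let Ω be a compact oriented l-dimensional manifold with piecewise smooth boundary embedded in ℝ^m. Then the l-dimensional volume of Ω is at least its projection volume, where the projection volume is defined as the square root of the sum over all index tuples 1 ≤ i_1 < ... < i_l ≤ m of the square of the integral over Ω of dx_{i_1} ∧ ... ∧ dx_{i_l}. -/
open MeasureTheory

/-- vol(Ω) ≥ vol_proj(Ω): a compact oriented `l`-dimensional manifold `Ω` with piecewise smooth
boundary embedded in `ℝ^m` is represented by its Riemannian volume measure `μ`; for each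
increasing index tuple `t = (i₁ < ... < i_l)` (an `l`-element subset of `Fin m`), `f t x` is the
value of the form `dx_{i₁} ∧ ... ∧ dx_{i_l}` on the oriented unit `l`-volume of `Ω` at `x`, so
that `vol(Ω) = ∫_Ω sqrt (Σ_t (dx_{i₁} ∧ ... ∧ dx_{i_l})²)` is the right-hand side and
`vol_proj(Ω) = sqrt (Σ_t (∫_Ω dx_{i₁} ∧ ... ∧ dx_{i_l})²)` is the left-hand side. -/
theorem stmt_1 (l m : ℕ) {Ω : Type*} [MeasurableSpace Ω] (μ : Measure Ω)
    (f : {t : Finset (Fin m) // t.card = l} → Ω → ℝ)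
    (hf : ∀ t, Integrable (f t) μ)
    (hf2 : Integrable (fun x => Real.sqrt (∑ t, f t x ^ 2)) μ) :
    Real.sqrt (∑ t, (∫ x, f t x ∂μ) ^ 2) ≤ ∫ x, Real.sqrt (∑ t, f t x ^ 2) ∂μ := by
  classical
  set g : Ω → EuclideanSpace ℝ {t : Finset (Fin m) // t.card = l} :=
    fun x => WithLp.toLp 2 (fun t => f t x) with hgdef
  have hgsum : g = fun x => ∑ t, (f t x) • (EuclideanSpace.single t (1:ℝ)) := by
    funext x
    ext t
    have := map_sum (EuclideanSpace.proj (𝕜 := ℝ) t)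
      (fun s => (f s x) • (EuclideanSpace.single s (1:ℝ))) Finset.univ
    simp only [_root_.map_smul] at this
    show f t x = EuclideanSpace.proj (𝕜 := ℝ) t
      (∑ s, (f s x) • (EuclideanSpace.single s (1:ℝ)))
    rw [this]
    simp [EuclideanSpace.single_apply, Finset.sum_ite_eq']
  have hnorm : ∀ x, ‖g x‖ = Real.sqrt (∑ t, f t x ^ 2) := by
    intro x
    rw [EuclideanSpace.norm_eq]
    congr 1
    refine Finset.sum_congr rfl fun t _ => ?_
    rw [Real.norm_eq_abs, sq_abs]
  have hg : Integrable g μ := by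
    rw [hgsum]
    exact integrable_finset_sum _ fun t _ => (hf t).smul_const _
  have hcomp : ∀ t, (∫ x, g x ∂μ) t = ∫ x, f t x ∂μ := by
    intro t
    have := (EuclideanSpace.proj (𝕜 := ℝ) t).integral_comp_comm hg
    simpa [hgdef] using this.symm
  have key : ‖∫ x, g x ∂μ‖ ≤ ∫ x, ‖g x‖ ∂μ := norm_integral_le_integral_norm g
  rw [EuclideanSpace.norm_eq] at key
  calc Real.sqrt (∑ t, (∫ x, f t x ∂μ) ^ 2)
      = Real.sqrt (∑ t, ‖(∫ x, g x ∂μ) t‖ ^ 2) := by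
        congr 1
        exact Finset.sum_congr rfl fun t _ => by rw [hcomp, Real.norm_eq_abs, sq_abs]
    _ ≤ ∫ x, ‖g x‖ ∂μ := key
    _ = ∫ x, Real.sqrt (∑ t, f t x ^ 2) ∂μ :=
        integral_congr_ae (Filter.Eventually.of_forall hnorm)
end

section
/- Let X be a simplicial complex of dimension n, 0 ≤ k ≤ n-1, and η_0, η_1 ∈ X^(k) with η_0 ∩ η_1 = τ a (k-1)-simplex. If the link X_τ is path connected (as a graph on its vertices and edges), then η_0 and η_1 are connected by a (k+1)-gallery in X. -/
variable {V : Type*} [DecidableEq V]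

/-- The set of `j`-dimensional simplices of a simplicial complex `K`. -/
def faces (K : Finset (Finset V)) (j : ℕ) : Finset (Finset V) :=
  K.filter fun σ => σ.card = j + 1

/-- `K` is closed under passing to (nonempty) faces. -/
def IsDownClosed (K : Finset (Finset V)) : Prop :=
  ∀ σ ∈ K, ∀ τ : Finset V, τ ⊆ σ → τ.Nonempty → τ ∈ K

/-- `η₀` and `η₁` are connected by a `(k+1)`-gallery with simplices in `F`. -/
def GalleryConnects (k : ℕ) (F : Finset (Finset V)) (η₀ η₁ : Finset V) : Prop :=
  η₀ = η₁ ∨ ∃ (L : List (Finset V)) (h : L ≠ []),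
    (∀ σ ∈ L, σ ∈ F) ∧ L.Chain' (fun a b => (a ∩ b).card = k + 1) ∧
    η₀ ⊆ L.head h ∧ η₁ ⊆ L.getLast h

/-- `a` and `b` are adjacent vertices of the link `X_τ`. -/
def LinkAdj (K : Finset (Finset V)) (τ : Finset V) (a b : V) : Prop :=
  a ∉ τ ∧ b ∉ τ ∧ a ≠ b ∧ insert a (insert b τ) ∈ K

/-- The link `X_τ` is path connected: any two of its vertices are joined by a path in its
`1`-skeleton. -/
def LinkConnected (K : Finset (Finset V)) (τ : Finset V) : Prop :=
  ∀ u v : V, u ∉ τ → insert u τ ∈ K → v ∉ τ → insert v τ ∈ K →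
    Relation.ReflTransGen (LinkAdj K τ) u v


lemma gallery_of_chain (K : Finset (Finset V)) (k : ℕ) (τ : Finset V)
    (hτcard : τ.card = k) (η₁ : Finset V) (u₁ : V) (hu₁ : η₁ = insert u₁ τ)
    (u : V) (h : Relation.ReflTransGen (LinkAdj K τ) u u₁) :
    GalleryConnects k (faces K (k + 1)) (insert u τ) η₁ := by
  induction h using Relation.ReflTransGen.head_induction_on with
  | refl => exact Or.inl hu₁.symm
  | head hab hbc ih =>
    rename_i a b
    obtain ⟨ha, hb, hne, hK⟩ := hab
    set σ : Finset V := insert a (insert b τ) with hσ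
    have hσcard : σ.card = k + 2 := by
      rw [hσ, Finset.card_insert_of_notMem (by simp [hne, ha]),
        Finset.card_insert_of_notMem hb, hτcard]
    have hσF : σ ∈ faces K (k + 1) := by
      simp only [faces, Finset.mem_filter]
      exact ⟨hK, hσcard⟩
    have hbσ : insert b τ ⊆ σ := Finset.subset_insert _ _
    have haσ : insert a τ ⊆ σ := by
      intro x hx
      rcases Finset.mem_insert.mp hx with h | h
      · simp [hσ, h]
      · simp [hσ, h]
    have hbcard : (insert b τ).card = k + 1 := by
      rw [Finset.card_insert_of_notMem hb, hτcard]
    rcases ih with heq | ⟨L, hL, hmem, hchain, hhead, hlast⟩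
    · refine Or.inr ⟨[σ], by simp, ?_, List.isChain_singleton _, ?_, ?_⟩
      · simpa using hσF
      · simpa using haσ
      · simpa using heq ▸ hbσ
    · by_cases hsub : insert a τ ⊆ L.head hL
      · exact Or.inr ⟨L, hL, hmem, hchain, hsub, hlast⟩
      · refine Or.inr ⟨σ :: L, by simp, ?_, ?_, ?_, ?_⟩
        · intro x hx
          rcases List.mem_cons.mp hx with h | h
          · exact h ▸ hσF
          · exact hmem x h
        · refine List.isChain_cons.mpr ⟨?_, hchain⟩
          intro y hy
          have hyH : y = L.head hL := by
            have := List.head?_eq_head hL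
            rw [this] at hy
            exact (Option.mem_some_iff.mp hy).symm
          subst hyH
          set H := L.head hL with hH
          have hHF : H ∈ faces K (k + 1) := hmem _ (List.head_mem hL)
          have hHcard : H.card = k + 2 := (Finset.mem_filter.mp hHF).2
          have h1 : insert b τ ⊆ σ ∩ H := Finset.subset_inter hbσ hhead
          have hge : k + 1 ≤ (σ ∩ H).card := hbcard ▸ Finset.card_le_card h1
          have hle : (σ ∩ H).card ≤ k + 2 :=
            hσcard ▸ Finset.card_le_card Finset.inter_subset_left
          rcases Nat.lt_or_ge (σ ∩ H).card (k + 2) with hlt | hge2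
          · omega
          · exfalso
            have hint : σ ∩ H = σ :=
              Finset.eq_of_subset_of_card_le Finset.inter_subset_left (by omega)
            have hσH : σ ⊆ H := by rw [← hint]; exact Finset.inter_subset_right
            have : σ = H := Finset.eq_of_subset_of_card_le hσH (by omega)
            exact hsub (this ▸ haσ)
        · simpa using haσ
        · rw [List.getLast_cons hL]; exact hlast

/-- If `η₀, η₁ ∈ X^(k)` satisfy `η₀ ∩ η₁ = τ` with `τ` a `(k-1)`-simplex and the link `X_τ` is
path connected, then `η₀` and `η₁` are connected by a `(k+1)`-gallery in `X`. -/
theorem stmt_10 (K : Finset (Finset V)) (n k : ℕ) (hk : 1 ≤ k) (hkn : k + 1 ≤ n)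
    (hdim : ∀ σ ∈ K, σ.card ≤ n + 1) (hdown : IsDownClosed K)
    (η₀ η₁ : Finset V) (h₀ : η₀ ∈ faces K k) (h₁ : η₁ ∈ faces K k)
    (τ : Finset V) (hτ : η₀ ∩ η₁ = τ) (hτcard : τ.card = k)
    (hlink : LinkConnected K τ) :
    GalleryConnects k (faces K (k + 1)) η₀ η₁ := by
  have hτ0 : τ ⊆ η₀ := hτ ▸ Finset.inter_subset_left
  have hτ1 : τ ⊆ η₁ := hτ ▸ Finset.inter_subset_right
  have hc0 : η₀.card = k + 1 := (Finset.mem_filter.mp h₀).2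
  have hc1 : η₁.card = k + 1 := (Finset.mem_filter.mp h₁).2
  have extract : ∀ η : Finset V, τ ⊆ η → η.card = k + 1 →
      ∃ u, η = insert u τ ∧ u ∉ τ := by
    intro η hτη hc
    have hcd : (η \ τ).card = 1 := by rw [Finset.card_sdiff_of_subset hτη, hc, hτcard]; omega
    obtain ⟨u, hu⟩ := Finset.card_eq_one.mp hcd
    have huη : u ∈ η \ τ := hu ▸ Finset.mem_singleton_self u
    have huτ : u ∉ τ := (Finset.mem_sdiff.mp huη).2
    refine ⟨u, ?_, huτ⟩
    have hsub : insert u τ ⊆ η := Finset.insert_subset (Finset.mem_sdiff.mp huη).1 hτη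
    refine (Finset.eq_of_subset_of_card_le hsub ?_).symm
    rw [Finset.card_insert_of_notMem huτ, hτcard, hc]
  obtain ⟨u₀, he0, hu0⟩ := extract η₀ hτ0 hc0
  obtain ⟨u₁, he1, hu1⟩ := extract η₁ hτ1 hc1
  have hpath := hlink u₀ u₁ hu0 (he0 ▸ (Finset.mem_filter.mp h₀).1)
    hu1 (he1 ▸ (Finset.mem_filter.mp h₁).1)
  exact he0 ▸ gallery_of_chain K k τ hτcard η₁ u₁ he1 u₀ hpath
end
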